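/- Let G = ⟨a,b,c | bab⁻¹a⁻¹ = c, ac = ca, bc = cb⟩ be the Heisenberg group and H the cyclic subgroup generated by c. Then the lower distortion dist^H_G and the upper distortion Dist^H_G are both equivalent to a quadratic function. -/

import Mathlib

/-- The discrete Heisenberg group in normal-form coordinates: the element
`⟨k, l, p⟩` represents `a^k b^l c^p`.  (Equivalently, upper triangular `3×3`
integer matrices with `1`s on the diagonal.) -/
@[ext] structure Heis where
  k : ℤ
  l : ℤ
  p : ℤ

namespace Heis

instance : Mul Heis := ⟨fun x y => ⟨x.k + y.k, x.l + y.l, x.p + y.p + x.l * y.k⟩⟩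
instance : One Heis := ⟨⟨0, 0, 0⟩⟩
instance : Inv Heis := ⟨fun x => ⟨-x.k, -x.l, -x.p + x.l * x.k⟩⟩

lemma mul_def (x y : Heis) : x * y = ⟨x.k + y.k, x.l + y.l, x.p + y.p + x.l * y.k⟩ := rfl
lemma one_def : (1 : Heis) = ⟨0, 0, 0⟩ := rfl
lemma inv_def (x : Heis) : x⁻¹ = ⟨-x.k, -x.l, -x.p + x.l * x.k⟩ := rfl

instance : Group Heis where
  mul_assoc x y z := by ext <;> simp [mul_def] <;> ring
  one_mul x := by ext <;> simp [mul_def, one_def]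
  mul_one x := by ext <;> simp [mul_def, one_def]
  inv_mul_cancel x := by ext <;> simp [mul_def, inv_def, one_def]

/-- The generator `a`. -/
def a : Heis := ⟨1, 0, 0⟩
/-- The generator `b`. -/
def b : Heis := ⟨0, 1, 0⟩
/-- The generator `c`. -/
def c : Heis := ⟨0, 0, 1⟩

end Heis


open Heis

/-- Domination relation: `f ≼ g` iff there are positive constants `A, B, C` with
`f x ≤ g (A*x) + B*x` for all `x > C`. -/
def Dominates (f g : ℝ → ℝ) : Prop :=
  ∃ A B C : ℝ, 0 < A ∧ 0 < B ∧ 0 < C ∧ ∀ x : ℝ, C < x → f x ≤ g (A * x) + B * x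

/-- `f ∼ g` iff `f ≼ g` and `g ≼ f`. -/
def FEquiv (f g : ℝ → ℝ) : Prop := Dominates f g ∧ Dominates g f

/-- The word length of `g` with respect to the (symmetrized) alphabet `S`. -/
noncomputable def wordLength {G : Type*} [Group G] (S : Set G) (g : G) : ℕ :=
  sInf {n | ∃ w : List G, (∀ x ∈ w, x ∈ S ∨ x⁻¹ ∈ S) ∧ w.prod = g ∧ w.length = n}

/-- The lower distortion of the subset `K` of `G`:
`dist(r) = min { |k|_T : k ∈ K, |k|_S ≥ r }` (with `min ∅ = 0`). -/
noncomputable def lowerDist {G : Type*} [Group G] (S K T : Set G) (r : ℝ) : ℝ :=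
  sInf {y : ℝ | ∃ k ∈ K, r ≤ (wordLength S k : ℝ) ∧ y = (wordLength T k : ℝ)}

/-- The upper distortion of the subset `K` of `G`:
`Dist(r) = max { |k|_T : k ∈ K, |k|_S ≤ r }`. -/
noncomputable def upperDist {G : Type*} [Group G] (S K T : Set G) (r : ℝ) : ℝ :=
  sSup {y : ℝ | ∃ k ∈ K, (wordLength S k : ℝ) ≤ r ∧ y = (wordLength T k : ℝ)}


/-- The generating set `S = {a,b,c}` of the Heisenberg group. -/
def heisGens : Set Heis := {a, b, c}
namespace HeisAux
open Heis

lemma a_zpow (n : ℤ) : a ^ n = (⟨n, 0, 0⟩ : Heis) := by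
  induction n using Int.induction_on with
  | zero => rfl
  | succ m ih => rw [zpow_add_one, ih]; ext <;> simp [mul_def, a]
  | pred m ih => rw [zpow_sub_one, ih]; ext <;> simp [mul_def, inv_def, a] <;> ring

lemma b_zpow (n : ℤ) : b ^ n = (⟨0, n, 0⟩ : Heis) := by
  induction n using Int.induction_on with
  | zero => rfl
  | succ m ih => rw [zpow_add_one, ih]; ext <;> simp [mul_def, b]
  | pred m ih => rw [zpow_sub_one, ih]; ext <;> simp [mul_def, inv_def, b] <;> ring

lemma c_zpow (n : ℤ) : c ^ n = (⟨0, 0, n⟩ : Heis) := by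
  induction n using Int.induction_on with
  | zero => rfl
  | succ m ih => rw [zpow_add_one, ih]; ext <;> simp [mul_def, c]
  | pred m ih => rw [zpow_sub_one, ih]; ext <;> simp [mul_def, inv_def, c] <;> ring

lemma id1 (n r : ℤ) :
    b ^ n * a ^ n * b ^ (-n) * a ^ (-n) * c ^ r = (⟨0, 0, n ^ 2 + r⟩ : Heis) := by
  rw [a_zpow, b_zpow, a_zpow, b_zpow, c_zpow]
  ext <;> simp [mul_def] <;> ring

lemma id2 (n r : ℤ) :
    a ^ n * b ^ n * a ^ (-n) * b ^ (-n) * c ^ r = (⟨0, 0, -n ^ 2 + r⟩ : Heis) := by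
  rw [a_zpow, b_zpow, a_zpow, b_zpow, c_zpow]
  ext <;> simp [mul_def] <;> ring

end HeisAux
namespace HeisAux
open Heis

lemma wordLength_le {G : Type*} [Group G] (S : Set G) {g : G} {w : List G}
    (hw : ∀ x ∈ w, x ∈ S ∨ x⁻¹ ∈ S) (hp : w.prod = g) :
    wordLength S g ≤ w.length :=
  Nat.sInf_le ⟨w, hw, hp, rfl⟩

/-- A list representing `g ^ z`. -/
def genList {G : Type*} [Group G] (g : G) (z : ℤ) : List G :=
  List.replicate z.natAbs (if 0 ≤ z then g else g⁻¹)

lemma genList_prod {G : Type*} [Group G] (g : G) (z : ℤ) : (genList g z).prod = g ^ z := by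
  unfold genList
  rcases le_or_gt 0 z with h | h
  · rw [if_pos h, List.prod_replicate, ← zpow_natCast, Int.natAbs_of_nonneg h]
  · rw [if_neg (not_le.2 h), List.prod_replicate, inv_pow, ← zpow_natCast,
      ← zpow_neg, Int.ofNat_natAbs_of_nonpos h.le, neg_neg]

lemma genList_length {G : Type*} [Group G] (g : G) (z : ℤ) :
    (genList g z).length = z.natAbs := List.length_replicate

lemma genList_mem {G : Type*} [Group G] {g : G} {z : ℤ} {x : G} (hx : x ∈ genList g z) :
    x = g ∨ x = g⁻¹ := by
  unfold genList at hx
  rcases List.eq_of_mem_replicate hx with h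
  split at h <;> simp [h]

lemma genList_cond {G : Type*} [Group G] {g : G} {S : Set G} (hg : g ∈ S) (z : ℤ) :
    ∀ x ∈ genList g z, x ∈ S ∨ x⁻¹ ∈ S := by
  intro x hx
  rcases genList_mem hx with h | h
  · exact Or.inl (h ▸ hg)
  · right; rw [h, inv_inv]; exact hg

lemma mem_gens_cases {x : Heis} (h : x ∈ heisGens ∨ x⁻¹ ∈ heisGens) :
    |x.k| ≤ 1 ∧ |x.l| ≤ 1 ∧ |x.p| ≤ 1 := by
  have : x = a ∨ x = b ∨ x = c ∨ x = a⁻¹ ∨ x = b⁻¹ ∨ x = c⁻¹ := by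
    rcases h with h | h
    · rcases h with h | h | h
      · exact Or.inl h
      · exact Or.inr (Or.inl h)
      · exact Or.inr (Or.inr (Or.inl h))
    · rcases h with h | h | h
      · exact Or.inr (Or.inr (Or.inr (Or.inl (by rw [← h, inv_inv]))))
      · exact Or.inr (Or.inr (Or.inr (Or.inr (Or.inl (by rw [← h, inv_inv])))))
      · exact Or.inr (Or.inr (Or.inr (Or.inr (Or.inr (by rw [← h, inv_inv])))))
  rcases this with h | h | h | h | h | h <;> subst h <;>
    simp [a, b, c, inv_def]

lemma word_bound (w : List Heis) (hw : ∀ x ∈ w, x ∈ heisGens ∨ x⁻¹ ∈ heisGens) :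
    |w.prod.k| ≤ (w.length : ℤ) ∧ |w.prod.l| ≤ (w.length : ℤ) ∧
      |w.prod.p| ≤ (w.length : ℤ) ^ 2 := by
  induction w with
  | nil => simp [one_def]
  | cons s t ih =>
    obtain ⟨hk, hl, hp⟩ := ih (fun x hx => hw x (List.mem_cons_of_mem s hx))
    obtain ⟨sk, sl, sp⟩ := mem_gens_cases (hw s (List.mem_cons_self))
    have h1 : |(s * t.prod).k| = |s.k + t.prod.k| := rfl
    have h2 : |(s * t.prod).l| = |s.l + t.prod.l| := rfl
    have h3 : |(s * t.prod).p| = |s.p + t.prod.p + s.l * t.prod.k| := rfl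
    have hsl : |s.l * t.prod.k| ≤ 1 * (t.length : ℤ) := by
      rw [abs_mul]; exact mul_le_mul sl hk (abs_nonneg _) zero_le_one
    simp only [List.prod_cons, List.length_cons, h1, h2, h3]
    push_cast
    refine ⟨?_, ?_, ?_⟩
    · calc |s.k + t.prod.k| ≤ |s.k| + |t.prod.k| := abs_add_le _ _
        _ ≤ (t.length : ℤ) + 1 := by linarith
    · calc |s.l + t.prod.l| ≤ |s.l| + |t.prod.l| := abs_add_le _ _
        _ ≤ (t.length : ℤ) + 1 := by linarith
    · calc |s.p + t.prod.p + s.l * t.prod.k|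
          ≤ |s.p + t.prod.p| + |s.l * t.prod.k| := abs_add_le _ _
        _ ≤ (|s.p| + |t.prod.p|) + |s.l * t.prod.k| := by linarith [abs_add_le s.p t.prod.p]
        _ ≤ ((t.length : ℤ) + 1) ^ 2 := by nlinarith [abs_nonneg t.prod.p]

lemma cword_bound (w : List Heis) (hw : ∀ x ∈ w, x ∈ ({c} : Set Heis) ∨ x⁻¹ ∈ ({c} : Set Heis)) :
    |w.prod.p| ≤ (w.length : ℤ) := by
  induction w with
  | nil => simp [one_def]
  | cons s t ih =>
    have ht := ih (fun x hx => hw x (List.mem_cons_of_mem s hx))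
    have hs : s = c ∨ s = c⁻¹ := by
      rcases hw s (List.mem_cons_self) with h | h
      · exact Or.inl h
      · right; rw [← h, inv_inv]
    have h3 : |(s * t.prod).p| = |s.p + t.prod.p + s.l * t.prod.k| := rfl
    have hsl : s.l = 0 ∧ |s.p| ≤ 1 := by
      rcases hs with h | h <;> subst h <;> simp [c, inv_def]
    simp only [List.prod_cons, List.length_cons, h3, hsl.1, zero_mul, add_zero]
    push_cast
    calc |s.p + t.prod.p| ≤ |s.p| + |t.prod.p| := abs_add_le _ _
      _ ≤ (t.length : ℤ) + 1 := by linarith [hsl.2]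

end HeisAux
namespace HeisAux
open Heis

lemma genWord_c (p : ℤ) : ∃ w : List Heis,
    (∀ x ∈ w, x ∈ ({c} : Set Heis) ∨ x⁻¹ ∈ ({c} : Set Heis)) ∧
    w.prod = (⟨0, 0, p⟩ : Heis) ∧ w.length = p.natAbs :=
  ⟨genList c p, genList_cond (Set.mem_singleton c) p, by rw [genList_prod, c_zpow], genList_length c p⟩

/-- `|c^p|_{c} = |p|`. -/
lemma wlT_eq (p : ℤ) : wordLength ({c} : Set Heis) (⟨0, 0, p⟩ : Heis) = p.natAbs := by
  obtain ⟨w, hw, hprod, hlen⟩ := genWord_c p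
  have hle : wordLength ({c} : Set Heis) (⟨0, 0, p⟩ : Heis) ≤ p.natAbs :=
    hlen ▸ wordLength_le _ hw hprod
  have hne : {n | ∃ w : List Heis, (∀ x ∈ w, x ∈ ({c} : Set Heis) ∨ x⁻¹ ∈ ({c} : Set Heis)) ∧
      w.prod = (⟨0, 0, p⟩ : Heis) ∧ w.length = n}.Nonempty := ⟨p.natAbs, w, hw, hprod, hlen⟩
  obtain ⟨v, hv, hvprod, hvlen⟩ := Nat.sInf_mem hne
  have hb := cword_bound v hv
  rw [hvprod] at hb
  simp only at hb
  rw [Int.abs_eq_natAbs] at hb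
  have h2 : p.natAbs ≤ v.length := by exact_mod_cast hb
  have hv2 : v.length = wordLength ({c} : Set Heis) (⟨0, 0, p⟩ : Heis) := hvlen
  omega

/-- quadratic lower bound :  `|p| ≤ |c^p|_S ^ 2`. -/
lemma wlS_sq_ge (p : ℤ) : p.natAbs ≤ (wordLength heisGens (⟨0, 0, p⟩ : Heis)) ^ 2 := by
  have hc : c ∈ heisGens := by simp [heisGens]
  have hne : {n | ∃ w : List Heis, (∀ x ∈ w, x ∈ heisGens ∨ x⁻¹ ∈ heisGens) ∧
      w.prod = (⟨0, 0, p⟩ : Heis) ∧ w.length = n}.Nonempty :=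
    ⟨p.natAbs, genList c p, genList_cond hc p, by rw [genList_prod, c_zpow], genList_length c p⟩
  obtain ⟨v, hv, hvprod, hvlen⟩ := Nat.sInf_mem hne
  obtain ⟨-, -, hb⟩ := word_bound v hv
  rw [hvprod] at hb
  simp only at hb
  rw [Int.abs_eq_natAbs] at hb
  have h2 : p.natAbs ≤ v.length ^ 2 := by exact_mod_cast hb
  have hv2 : v.length = wordLength heisGens (⟨0, 0, p⟩ : Heis) := hvlen
  exact hv2 ▸ h2

/-- square-root upper bound : `|c^p|_S ≤ 6 √|p|`. -/
lemma wlS_le (p : ℤ) : wordLength heisGens (⟨0, 0, p⟩ : Heis) ≤ 6 * Nat.sqrt p.natAbs := by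
  have ha : a ∈ heisGens := by simp [heisGens]
  have hb : b ∈ heisGens := by simp [heisGens]
  have hc : c ∈ heisGens := by simp [heisGens]
  set n : ℕ := Nat.sqrt p.natAbs with hn
  have hn1 : (n : ℤ) ^ 2 ≤ |p| := by
    have := Nat.sqrt_le' p.natAbs
    rw [Int.abs_eq_natAbs]
    exact_mod_cast (by nlinarith [Nat.sqrt_le' p.natAbs] : n ^ 2 ≤ p.natAbs)
  have hn2 : |p| < ((n : ℤ) + 1) ^ 2 := by
    have := Nat.lt_succ_sqrt' p.natAbs
    rw [Int.abs_eq_natAbs]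
    exact_mod_cast (by nlinarith [Nat.lt_succ_sqrt' p.natAbs] : p.natAbs < (n + 1) ^ 2)
  rcases le_or_gt 0 p with hp | hp
  · -- p ≥ 0 : use b^n a^n b^{-n} a^{-n} c^r with r = p - n²
    set r : ℤ := p - (n : ℤ) ^ 2 with hr
    have hr0 : 0 ≤ r := by rw [hr]; rw [abs_of_nonneg hp] at hn1; linarith
    have hrle : r.natAbs ≤ 2 * n := by
      rw [abs_of_nonneg hp] at hn2
      have : r ≤ 2 * n := by rw [hr]; nlinarith
      omega
    set w : List Heis := genList b n ++ genList a n ++ genList b (-(n : ℤ)) ++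
      genList a (-(n : ℤ)) ++ genList c r with hw
    have hcond : ∀ x ∈ w, x ∈ heisGens ∨ x⁻¹ ∈ heisGens := by
      intro x hx
      simp only [hw, List.mem_append] at hx
      rcases hx with (((h | h) | h) | h) | h
      exacts [genList_cond hb _ x h, genList_cond ha _ x h, genList_cond hb _ x h,
        genList_cond ha _ x h, genList_cond hc _ x h]
    have hprod : w.prod = (⟨0, 0, p⟩ : Heis) := by
      simp only [hw, List.prod_append, genList_prod]
      rw [id1]
      congr 1
      rw [hr]; ring
    have hlen : w.length ≤ 6 * n := by
      simp only [hw, List.length_append, genList_length]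
      simp [Int.natAbs_natCast]
      omega
    exact le_trans (wordLength_le _ hcond hprod) hlen
  · -- p < 0 : use a^n b^n a^{-n} b^{-n} c^r with r = p + n²
    set r : ℤ := p + (n : ℤ) ^ 2 with hr
    have hr0 : r ≤ 0 := by rw [hr]; rw [abs_of_neg hp] at hn1; linarith
    have hrle : r.natAbs ≤ 2 * n := by
      rw [abs_of_neg hp] at hn2
      have h1 : -(2 * (n : ℤ)) ≤ r := by rw [hr]; nlinarith
      omega
    set w : List Heis := genList a n ++ genList b n ++ genList a (-(n : ℤ)) ++
      genList b (-(n : ℤ)) ++ genList c r with hw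
    have hcond : ∀ x ∈ w, x ∈ heisGens ∨ x⁻¹ ∈ heisGens := by
      intro x hx
      simp only [hw, List.mem_append] at hx
      rcases hx with (((h | h) | h) | h) | h
      exacts [genList_cond ha _ x h, genList_cond hb _ x h, genList_cond ha _ x h,
        genList_cond hb _ x h, genList_cond hc _ x h]
    have hprod : w.prod = (⟨0, 0, p⟩ : Heis) := by
      simp only [hw, List.prod_append, genList_prod]
      rw [id2]
      congr 1
      rw [hr]; ring
    have hlen : w.length ≤ 6 * n := by
      simp only [hw, List.length_append, genList_length]
      simp [Int.natAbs_natCast]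
      omega
    exact le_trans (wordLength_le _ hcond hprod) hlen

end HeisAux
namespace HeisAux
open Heis

/-- abbreviation for the word length of `c^p` w.r.t. `S`. -/
noncomputable def F (p : ℤ) : ℕ := wordLength heisGens (⟨0, 0, p⟩ : Heis)

def lowSet (r : ℝ) : Set ℝ :=
  {y | ∃ p : ℤ, r ≤ (F p : ℝ) ∧ y = (p.natAbs : ℝ)}

def upSet (r : ℝ) : Set ℝ :=
  {y | ∃ p : ℤ, (F p : ℝ) ≤ r ∧ y = (p.natAbs : ℝ)}

lemma set_eq_low (r : ℝ) :
    {y : ℝ | ∃ k ∈ ((Subgroup.zpowers c : Subgroup Heis) : Set Heis),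
      r ≤ (wordLength heisGens k : ℝ) ∧ y = (wordLength ({c} : Set Heis) k : ℝ)} = lowSet r := by
  ext y
  constructor
  · rintro ⟨k, hk, h1, h2⟩
    obtain ⟨m, hm⟩ := Subgroup.mem_zpowers_iff.mp (SetLike.mem_coe.mp hk)
    rw [c_zpow] at hm
    subst hm
    exact ⟨m, h1, by rw [h2, wlT_eq]⟩
  · rintro ⟨p, h1, h2⟩
    refine ⟨⟨0, 0, p⟩, ?_, h1, by rw [h2, wlT_eq]⟩
    exact SetLike.mem_coe.mpr (Subgroup.mem_zpowers_iff.mpr ⟨p, c_zpow p⟩)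

lemma set_eq_up (r : ℝ) :
    {y : ℝ | ∃ k ∈ ((Subgroup.zpowers c : Subgroup Heis) : Set Heis),
      (wordLength heisGens k : ℝ) ≤ r ∧ y = (wordLength ({c} : Set Heis) k : ℝ)} = upSet r := by
  ext y
  constructor
  · rintro ⟨k, hk, h1, h2⟩
    obtain ⟨m, hm⟩ := Subgroup.mem_zpowers_iff.mp (SetLike.mem_coe.mp hk)
    rw [c_zpow] at hm
    subst hm
    exact ⟨m, h1, by rw [h2, wlT_eq]⟩
  · rintro ⟨p, h1, h2⟩
    refine ⟨⟨0, 0, p⟩, ?_, h1, by rw [h2, wlT_eq]⟩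
    exact SetLike.mem_coe.mpr (Subgroup.mem_zpowers_iff.mpr ⟨p, c_zpow p⟩)

lemma factA (p : ℤ) : (p.natAbs : ℝ) ≤ (F p : ℝ) ^ 2 := by
  exact_mod_cast wlS_sq_ge p

lemma sqrt_natAbs (p : ℤ) :
    (Nat.sqrt p.natAbs : ℝ) ≤ Real.sqrt (p.natAbs : ℝ) := by
  have h1 : ((Nat.sqrt p.natAbs : ℝ)) ^ 2 ≤ (p.natAbs : ℝ) := by
    exact_mod_cast Nat.sqrt_le' p.natAbs
  nlinarith [Real.sq_sqrt (by positivity : (0:ℝ) ≤ (p.natAbs : ℝ)),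
    Real.sqrt_nonneg ((p.natAbs : ℝ)), (Nat.cast_nonneg (Nat.sqrt p.natAbs) : (0:ℝ) ≤ _)]

lemma factB (p : ℤ) : (F p : ℝ) ≤ 6 * Real.sqrt (p.natAbs : ℝ) := by
  have h : (F p : ℝ) ≤ (6 * Nat.sqrt p.natAbs : ℕ) := by exact_mod_cast wlS_le p
  calc (F p : ℝ) ≤ ((6 * Nat.sqrt p.natAbs : ℕ) : ℝ) := h
    _ = 6 * (Nat.sqrt p.natAbs : ℝ) := by push_cast; ring
    _ ≤ 6 * Real.sqrt (p.natAbs : ℝ) := by linarith [sqrt_natAbs p]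

lemma F_sq_le (n : ℕ) : (F ((n : ℤ) ^ 2) : ℝ) ≤ 6 * n := by
  have h : F ((n : ℤ) ^ 2) ≤ 6 * n := by
    have h0 := wlS_le ((n : ℤ) ^ 2)
    rw [Int.natAbs_pow, Int.natAbs_natCast] at h0
    have hs : Nat.sqrt (n ^ 2) = n := Nat.sqrt_eq' n
    rw [hs] at h0
    exact h0
  exact_mod_cast h

lemma F_sq_ge (n : ℕ) : (n : ℝ) ≤ (F ((n : ℤ) ^ 2) : ℝ) := by
  have h := wlS_sq_ge ((n : ℤ) ^ 2)
  rw [Int.natAbs_pow, Int.natAbs_natCast] at h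
  have : n ≤ F ((n : ℤ) ^ 2) := (Nat.pow_le_pow_iff_left (by norm_num : (2:ℕ) ≠ 0)).mp h
  exact_mod_cast this

lemma low_bddBelow (r : ℝ) : BddBelow (lowSet r) := by
  refine ⟨0, ?_⟩
  rintro y ⟨p, -, rfl⟩
  positivity

lemma low_witness {r : ℝ} (hr : 0 ≤ r) : ∃ y ∈ lowSet r, y ≤ (r + 1) ^ 2 := by
  set n : ℕ := ⌈r⌉₊ with hn
  refine ⟨((n : ℤ) ^ 2).natAbs, ⟨(n : ℤ) ^ 2, ?_, rfl⟩, ?_⟩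
  · calc r ≤ (n : ℝ) := Nat.le_ceil r
      _ ≤ (F ((n : ℤ) ^ 2) : ℝ) := F_sq_ge n
  · rw [Int.natAbs_pow, Int.natAbs_natCast]
    have h1 : (n : ℝ) ≤ r + 1 := le_of_lt (Nat.ceil_lt_add_one hr)
    have h2 : (0 : ℝ) ≤ n := Nat.cast_nonneg n
    push_cast
    nlinarith

lemma up_bound {r : ℝ} (hr : 0 ≤ r) : ∀ y ∈ upSet r, y ≤ r ^ 2 := by
  rintro y ⟨p, h1, rfl⟩
  have hF : (0 : ℝ) ≤ (F p : ℝ) := Nat.cast_nonneg _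
  nlinarith [factA p]

end HeisAux

open HeisAux in
/-- For the Heisenberg group `G` with `H = ⟨c⟩`, both the lower distortion
`dist^H_G` and the upper distortion `Dist^H_G` are quadratic. -/
theorem heisenberg_distortions_quadratic :
    FEquiv (lowerDist heisGens ((Subgroup.zpowers c : Subgroup Heis) : Set Heis) {c})
      (fun x => x ^ 2) ∧
    FEquiv (upperDist heisGens ((Subgroup.zpowers c : Subgroup Heis) : Set Heis) {c})
      (fun x => x ^ 2) := by
  have hlow : ∀ r : ℝ,
      lowerDist heisGens ((Subgroup.zpowers c : Subgroup Heis) : Set Heis) {c} r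
        = sInf (lowSet r) := fun r => by
    rw [lowerDist, set_eq_low]
  have hup : ∀ r : ℝ,
      upperDist heisGens ((Subgroup.zpowers c : Subgroup Heis) : Set Heis) {c} r
        = sSup (upSet r) := fun r => by
    rw [upperDist, set_eq_up]
  have hF0 : F 0 = 0 := Nat.le_zero.mp (by simpa [F] using wlS_le 0)
  constructor
  · constructor
    · -- lowerDist ≼ x²
      refine ⟨1, 3, 1, one_pos, by norm_num, one_pos, fun x hx => ?_⟩
      have hx0 : (0 : ℝ) < x := by linarith
      rw [hlow]
      obtain ⟨y, hy, hyle⟩ := low_witness (r := x) hx0.le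
      have h1 := csInf_le (low_bddBelow x) hy
      show sInf (lowSet x) ≤ (1 * x) ^ 2 + 3 * x
      nlinarith
    · -- x² ≼ lowerDist
      refine ⟨7, 1, 1, by norm_num, one_pos, one_pos, fun x hx => ?_⟩
      have hx0 : (0 : ℝ) < x := by linarith
      rw [hlow]
      show x ^ 2 ≤ sInf (lowSet (7 * x)) + 1 * x
      have h1 : x ^ 2 ≤ sInf (lowSet (7 * x)) := by
        obtain ⟨y, hy, -⟩ := low_witness (r := 7 * x) (by linarith)
        refine le_csInf ⟨y, hy⟩ ?_
        rintro z ⟨p, hp, rfl⟩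
        have hB := factB p
        have hs := Real.sq_sqrt (by positivity : (0:ℝ) ≤ ((p.natAbs : ℝ)))
        have hs0 := Real.sqrt_nonneg ((p.natAbs : ℝ))
        nlinarith
      linarith
  · constructor
    · -- upperDist ≼ x²
      refine ⟨1, 1, 1, one_pos, one_pos, one_pos, fun x hx => ?_⟩
      have hx0 : (0 : ℝ) < x := by linarith
      rw [hup]
      show sSup (upSet x) ≤ (1 * x) ^ 2 + 1 * x
      have hne : (upSet x).Nonempty := ⟨(((0:ℤ).natAbs : ℝ)), 0, by simp [hF0, hx0.le], rfl⟩
      have h1 : sSup (upSet x) ≤ x ^ 2 := csSup_le hne (up_bound hx0.le)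
      nlinarith
    · -- x² ≼ upperDist
      refine ⟨13, 1, 1, by norm_num, one_pos, one_pos, fun x hx => ?_⟩
      have hx0 : (0 : ℝ) < x := by linarith
      rw [hup]
      show x ^ 2 ≤ sSup (upSet (13 * x)) + 1 * x
      set n : ℕ := ⌈x⌉₊ with hn
      have hbdd : BddAbove (upSet (13 * x)) :=
        ⟨(13 * x) ^ 2, fun y hy => up_bound (by linarith) y hy⟩
      have hnx : (n : ℝ) ≤ x + 1 := le_of_lt (Nat.ceil_lt_add_one hx0.le)
      have hxn : x ≤ (n : ℝ) := Nat.le_ceil x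
      have hmem : ((((n : ℤ) ^ 2).natAbs : ℝ)) ∈ upSet (13 * x) := by
        refine ⟨(n : ℤ) ^ 2, ?_, rfl⟩
        calc (F ((n : ℤ) ^ 2) : ℝ) ≤ 6 * n := F_sq_le n
          _ ≤ 13 * x := by nlinarith
      have h1 := le_csSup hbdd hmem
      have h2 : ((((n : ℤ) ^ 2).natAbs : ℝ)) = (n : ℝ) ^ 2 := by
        rw [Int.natAbs_pow, Int.natAbs_natCast]; push_cast; ring
      rw [h2] at h1
      nlinarith
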